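/- Let G be a finite abelian p-group. Then μ(G) = m(G), where m(G) is the sum of the orders of the cyclic factors in the primary decomposition of G. Concretely: if G ≅ ∏_{i=1}^n ZMod (p^{d_i}) with each d_i ≥ 1, then μ(G) = ∑_{i=1}^n p^{d_i}. -/

import Mathlib

open Finset

noncomputable def sdeg (p k : ℕ) (G : Type*) [CommGroup G] : ℕ :=
  (Nat.card ((powMonoidHom (p ^ k) : G →* G).range)).factorization p

noncomputable def mdeg (p B : ℕ) (G : Type*) [CommGroup G] : ℕ :=
  p * sdeg p 0 G + (p ^ 2 - 2 * p) * sdeg p 1 G +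
    ∑ k ∈ Finset.Icc 2 B, (p - 1) ^ 2 * p ^ (k - 1) * sdeg p k G

lemma sdeg_mono {G H : Type*} [CommGroup G] [CommGroup H] [Finite H]
    (f : G →* H) (hf : Function.Injective f) (p k : ℕ) : sdeg p k G ≤ sdeg p k H := by
  have : Finite G := Finite.of_injective f hf
  set RG := (powMonoidHom (p ^ k) : G →* G).range
  set RH := (powMonoidHom (p ^ k) : H →* H).range
  have h1 : Subgroup.map f RG ≤ RH := by
    rintro x ⟨y, ⟨g, rfl⟩, rfl⟩
    exact ⟨f g, (map_pow f g _).symm⟩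
  have e1 : Nat.card RG = Nat.card (Subgroup.map f RG) :=
    Nat.card_congr (RG.equivMapOfInjective f hf).toEquiv
  have hd : Nat.card RG ∣ Nat.card RH := e1 ▸ Subgroup.card_dvd_of_le h1
  have h2 : (Nat.card RG).factorization ≤ (Nat.card RH).factorization :=
    (Nat.factorization_le_iff_dvd Nat.card_pos.ne' Nat.card_pos.ne').mpr hd
  exact h2 p

lemma mdeg_mono {G H : Type*} [CommGroup G] [CommGroup H] [Finite H]
    (f : G →* H) (hf : Function.Injective f) (p B : ℕ) : mdeg p B G ≤ mdeg p B H := by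
  unfold mdeg
  gcongr <;> exact sdeg_mono f hf p _

lemma mdeg_congr {G H : Type*} [CommGroup G] [CommGroup H] [Finite H]
    (f : G ≃* H) (p B : ℕ) : mdeg p B G = mdeg p B H := by
  have : Finite G := Finite.of_equiv H f.symm.toEquiv
  exact le_antisymm (mdeg_mono f.toMonoidHom f.injective p B)
    (mdeg_mono f.symm.toMonoidHom f.symm.injective p B)

lemma range_pow_pi {ι : Type*} [Fintype ι] (A : ι → Type*) [∀ i, CommGroup (A i)] (m : ℕ) :
    (powMonoidHom m : (∀ i, A i) →* _).range
      = Subgroup.pi Set.univ (fun i => (powMonoidHom m : A i →* _).range) := by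
  ext x
  constructor
  · rintro ⟨g, rfl⟩ i _
    exact ⟨g i, rfl⟩
  · intro hx
    choose g hg using fun i => hx i (Set.mem_univ i)
    exact ⟨g, funext hg⟩

lemma card_pi_subgroup {ι : Type*} [Fintype ι] (A : ι → Type*) [∀ i, CommGroup (A i)]
    (H : ∀ i, Subgroup (A i)) :
    Nat.card (Subgroup.pi Set.univ H) = ∏ i, Nat.card (H i) := by
  rw [← Nat.card_pi]
  exact Nat.card_congr
    ⟨fun x i => ⟨x.1 i, x.2 i (Set.mem_univ i)⟩,
     fun x => ⟨fun i => x i, fun i _ => (x i).2⟩,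
     fun x => rfl, fun x => rfl⟩

lemma sdeg_pi {ι : Type*} [Fintype ι] (A : ι → Type*) [∀ i, CommGroup (A i)]
    [∀ i, Finite (A i)] (p k : ℕ) :
    sdeg p k (∀ i, A i) = ∑ i, sdeg p k (A i) := by
  unfold sdeg
  rw [range_pow_pi, card_pi_subgroup,
    Nat.factorization_prod (fun i _ => Nat.card_pos.ne')]
  simp [Finsupp.finset_sum_apply]

lemma mdeg_pi {ι : Type*} [Fintype ι] (A : ι → Type*) [∀ i, CommGroup (A i)]
    [∀ i, Finite (A i)] (p B : ℕ) :
    mdeg p B (∀ i, A i) = ∑ i, mdeg p B (A i) := by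
  unfold mdeg
  simp only [sdeg_pi, Finset.mul_sum]
  rw [Finset.sum_comm (s := Finset.Icc 2 B)]
  rw [Finset.sum_add_distrib, Finset.sum_add_distrib]

-- cyclic: range of pow map on Multiplicative (ZMod N)
lemma sdeg_zmod (p : ℕ) (hp : p.Prime) (d k : ℕ) :
    sdeg p k (Multiplicative (ZMod (p ^ d))) = d - k := by
  have hN : (p ^ d : ℕ) ≠ 0 := pow_ne_zero _ hp.pos.ne'
  haveI : NeZero (p ^ d) := ⟨hN⟩
  have hrange : (powMonoidHom (p ^ k) : Multiplicative (ZMod (p ^ d)) →* _).range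
      = Subgroup.zpowers (Multiplicative.ofAdd ((p ^ k : ℕ) : ZMod (p ^ d))) := by
    ext x
    constructor
    · rintro ⟨a, rfl⟩
      refine ⟨((Multiplicative.toAdd a).val : ℤ), ?_⟩
      have : (powMonoidHom (p ^ k) : Multiplicative (ZMod (p ^ d)) →* _) a
          = Multiplicative.ofAdd ((p ^ k : ℕ) • Multiplicative.toAdd a) := rfl
      rw [this]
      apply Multiplicative.toAdd.injective
      push_cast
      simp [zsmul_eq_mul, nsmul_eq_mul, ZMod.natCast_val, ZMod.cast_id, mul_comm]
    · rintro ⟨z, rfl⟩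
      refine ⟨Multiplicative.ofAdd ((z : ZMod (p ^ d))), ?_⟩
      apply Multiplicative.toAdd.injective
      have h1 : Multiplicative.toAdd ((powMonoidHom (p ^ k) :
          Multiplicative (ZMod (p ^ d)) →* _) (Multiplicative.ofAdd ((z : ZMod (p ^ d)))))
          = (p ^ k : ℕ) • ((z : ZMod (p ^ d))) := rfl
      have h2 : Multiplicative.toAdd ((Multiplicative.ofAdd ((p ^ k : ℕ) : ZMod (p ^ d))) ^ z)
          = z • (((p ^ k : ℕ) : ZMod (p ^ d))) := rfl
      rw [h1, h2]
      simp [zsmul_eq_mul, nsmul_eq_mul, mul_comm]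
  rw [sdeg, hrange, Nat.card_zpowers, orderOf_ofAdd_eq_addOrderOf,
    ZMod.addOrderOf_coe _ hN]
  rcases le_total k d with h | h
  · rw [Nat.gcd_eq_right (pow_dvd_pow p h), Nat.pow_div h hp.pos,
      hp.factorization_pow, Finsupp.single_eq_same]
  · rw [Nat.gcd_eq_left (pow_dvd_pow p h), Nat.div_self (Nat.pos_of_ne_zero hN)]
    simp [Nat.sub_eq_zero_of_le h]

lemma geoT (p : ℕ) (hp : 1 ≤ p) : ∀ d, 1 ≤ d →
    (p - 1) * ∑ k ∈ Finset.Icc 2 d, p ^ (k - 1) + p = p ^ d := by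
  obtain ⟨q, rfl⟩ := Nat.exists_eq_add_of_le hp
  intro d hd
  induction d with
  | zero => omega
  | succ d ih =>
    rcases Nat.eq_or_lt_of_le hd with h | h
    · simp [← h]
    · have hd1 : 1 ≤ d := by omega
      rw [Finset.sum_Icc_succ_top (by omega), Nat.mul_add, Nat.add_right_comm, ih hd1]
      have h1 : d + 1 - 1 = d := rfl
      have h2 : 1 + q - 1 = q := by omega
      rw [h1, h2]
      ring
lemma arith (p B d : ℕ) (hp : 2 ≤ p) (hd : 1 ≤ d) (hdB : d ≤ B) :
    p * (d - 0) + (p ^ 2 - 2 * p) * (d - 1) +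
      ∑ k ∈ Finset.Icc 2 B, (p - 1) ^ 2 * p ^ (k - 1) * (d - k) = p ^ d := by
  induction d with
  | zero => omega
  | succ d ih =>
    rcases Nat.eq_or_lt_of_le hd with h | h
    · have hd0 : d = 0 := by omega
      subst hd0
      have hz : ∀ k ∈ Finset.Icc 2 B, (p - 1) ^ 2 * p ^ (k - 1) * (1 - k) = 0 := by
        intro k hk; rw [Finset.mem_Icc] at hk; have : 1 - k = 0 := by omega
        rw [this, Nat.mul_zero]
      rw [Finset.sum_eq_zero hz]; simp
    · have hd1 : 1 ≤ d := by omega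
      have hdB' : d ≤ B := by omega
      have IH := ih hd1 hdB'
      have hsum : ∑ k ∈ Finset.Icc 2 B, (p - 1) ^ 2 * p ^ (k - 1) * (d + 1 - k)
          = (∑ k ∈ Finset.Icc 2 B, (p - 1) ^ 2 * p ^ (k - 1) * (d - k))
            + ∑ k ∈ Finset.Icc 2 d, (p - 1) ^ 2 * p ^ (k - 1) := by
        rw [show Finset.Icc 2 d = (Finset.Icc 2 B).filter (· ≤ d) by
          ext k; simp [Finset.mem_Icc, Finset.mem_filter]; omega]
        rw [Finset.sum_filter, ← Finset.sum_add_distrib]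
        refine Finset.sum_congr rfl fun k _ => ?_
        have hsplit : (d + 1 - k) = (d - k) + (if k ≤ d then 1 else 0) := by
          split <;> omega
        rw [hsplit]; split <;> ring
      rw [hsum]
      set S := ∑ k ∈ Finset.Icc 2 B, (p - 1) ^ 2 * p ^ (k - 1) * (d - k) with hS
      set T := ∑ k ∈ Finset.Icc 2 d, p ^ (k - 1) with hT
      have hTmul : ∑ k ∈ Finset.Icc 2 d, (p - 1) ^ 2 * p ^ (k - 1) = (p - 1) ^ 2 * T := by
        rw [hT, Finset.mul_sum]
      rw [hTmul]
      have hgeo : (p - 1) * T + p = p ^ d := geoT p (by omega) d hd1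
      have h2p : 2 * p ≤ p ^ 2 := by nlinarith
      have hp1 : 1 ≤ p := by omega
      simp only [Nat.sub_zero, Nat.add_sub_cancel] at IH ⊢
      zify [hp1, hd1, h2p] at IH hgeo ⊢
      linear_combination IH + ((p:ℤ) - 1) * hgeo

lemma mdeg_zmod (p B d : ℕ) (hp : p.Prime) (hd : 1 ≤ d) (hdB : d ≤ B) :
    mdeg p B (Multiplicative (ZMod (p ^ d))) = p ^ d := by
  unfold mdeg
  simp only [sdeg_zmod p hp]
  exact arith p B d hp.two_le hd hdB

lemma sum_le_prod' {ι : Type*} (s : Finset ι) (f : ι → ℕ) (hf : ∀ i ∈ s, 2 ≤ f i) :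
    ∑ i ∈ s, f i ≤ ∏ i ∈ s, f i := by
  classical
  induction s using Finset.induction with
  | empty => simp
  | @insert a s ha ih =>
    rw [Finset.sum_insert ha, Finset.prod_insert ha]
    have hfa : 2 ≤ f a := hf a (Finset.mem_insert_self a s)
    have hS : ∑ i ∈ s, f i ≤ ∏ i ∈ s, f i := ih fun i hi => hf i (Finset.mem_insert_of_mem hi)
    have hP : 1 ≤ ∏ i ∈ s, f i :=
      Finset.one_le_prod' fun i hi => by have := hf i (Finset.mem_insert_of_mem hi); omega
    rcases Finset.eq_empty_or_nonempty s with rfl | ⟨j, hj⟩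
    · simp
    · have hS2 : 2 ≤ ∑ i ∈ s, f i :=
        le_trans (hf j (Finset.mem_insert_of_mem hj)) (Finset.single_le_sum (fun i _ => Nat.zero_le _) hj)
      nlinarith [Nat.mul_le_mul_left (f a) hS]
lemma mdeg_le_card (p B : ℕ) (hp : p.Prime) (Q : Type*) [CommGroup Q] [Finite Q]
    (hB : ∀ q : Q, q ^ p ^ B = 1) : mdeg p B Q ≤ Nat.card Q := by
  classical
  obtain ⟨ι, hι, m, h1, ⟨eq⟩⟩ := CommGroup.equiv_prod_multiplicative_zmod_of_finite Q
  have hBpi : ∀ y : (∀ i, Multiplicative (ZMod (m i))), y ^ p ^ B = 1 := by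
    intro y
    rw [← eq.apply_symm_apply y, ← map_pow, hB, map_one]
  have hdvd : ∀ i, m i ∣ p ^ B := by
    intro i
    have hx' : (Multiplicative.ofAdd (1 : ZMod (m i))) ^ p ^ B = 1 := by
      have := congrFun (hBpi (Pi.mulSingle i (Multiplicative.ofAdd (1 : ZMod (m i))))) i
      simpa [Pi.pow_apply, Pi.mulSingle_eq_same] using this
    have := orderOf_dvd_of_pow_eq_one hx'
    rwa [orderOf_ofAdd_eq_addOrderOf, ZMod.addOrderOf_one] at this
  have hexp : ∀ i, ∃ e : ℕ, e ≤ B ∧ m i = p ^ e := by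
    intro i
    obtain ⟨e, he, hme⟩ := (Nat.dvd_prime_pow hp).mp (hdvd i)
    exact ⟨e, he, hme⟩
  choose E hE1 hE2 using hexp
  have hE0 : ∀ i, 1 ≤ E i := by
    intro i
    by_contra hcon
    have hz : E i = 0 := by omega
    have h1i := h1 i
    rw [hE2 i, hz, pow_zero] at h1i
    omega
  have hcard : Nat.card Q = ∏ i, m i := by
    rw [Nat.card_congr eq.toEquiv, Nat.card_pi]
    congr 1; funext i
    rw [Nat.card_congr Multiplicative.ofAdd.symm, Nat.card_zmod]
  haveI : ∀ i, NeZero (m i) := fun i => ⟨by have := h1 i; omega⟩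
  calc mdeg p B Q = ∑ i, mdeg p B (Multiplicative (ZMod (m i))) := by
        rw [mdeg_congr eq p B, mdeg_pi]
    _ = ∑ i, m i := by
        refine Finset.sum_congr rfl fun i _ => ?_
        rw [hE2 i, mdeg_zmod p B (E i) hp (hE0 i) (hE1 i)]
    _ ≤ ∏ i, m i := sum_le_prod' _ _ (fun i _ => h1 i)
    _ = Nat.card Q := hcard.symm

/-- permutation groups of equivalent types are isomorphic -/
def permMulEquiv {α β : Type*} (e : α ≃ β) : Equiv.Perm α ≃* Equiv.Perm β where
  toEquiv := e.permCongr
  map_mul' f g := by ext x; simp [Equiv.permCongr_apply]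

def piMapHom {ι : Type*} {A : ι → Type*} {C : ι → Type*} [∀ i, Group (A i)]
    [∀ i, Group (C i)] (f : ∀ i, A i →* C i) : (∀ i, A i) →* (∀ i, C i) :=
  Pi.monoidHom fun i => (f i).comp (Pi.evalMonoidHom A i)

lemma piMapHom_injective {ι : Type*} {A : ι → Type*} {C : ι → Type*} [∀ i, Group (A i)]
    [∀ i, Group (C i)] (f : ∀ i, A i →* C i) (hf : ∀ i, Function.Injective (f i)) :
    Function.Injective (piMapHom f) := by
  intro x y h
  funext i
  exact hf i (congrFun h i)

noncomputable def cayleyPerm (H : Type*) [Group H] [Fintype H] {n : ℕ}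
    (h : Fintype.card H = n) : H →* Equiv.Perm (Fin n) :=
  (permMulEquiv (Fintype.equivFinOfCardEq h)).toMonoidHom.comp (MulAction.toPermHom H H)

lemma cayleyPerm_injective (H : Type*) [Group H] [Fintype H] {n : ℕ}
    (h : Fintype.card H = n) : Function.Injective (cayleyPerm H h) := by
  rw [cayleyPerm, MonoidHom.coe_comp]
  exact (MulEquiv.injective _).comp MulAction.toPerm_injective

noncomputable def minFaithfulDegree (G : Type*) [Group G] : ℕ :=
  sInf {n : ℕ | ∃ f : G →* Equiv.Perm (Fin n), Function.Injective f}

theorem mu_abelian_p_group (G : Type*) [CommGroup G] [Finite G]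
    (p : ℕ) (hp : p.Prime) (n : ℕ) (d : Fin n → ℕ) (hd : ∀ i, 1 ≤ d i)
    (e : G ≃* ∀ i : Fin n, Multiplicative (ZMod (p ^ d i))) :
    minFaithfulDegree G = ∑ i : Fin n, p ^ d i := by
  classical
  haveI : ∀ i : Fin n, NeZero (p ^ d i) := fun i => ⟨pow_ne_zero _ hp.pos.ne'⟩
  set B := ∑ i : Fin n, d i with hB
  have hdB : ∀ i, d i ≤ B := fun i =>
    Finset.single_le_sum (fun j _ => Nat.zero_le _) (Finset.mem_univ i)
  set N₀ := ∑ i : Fin n, p ^ d i with hN₀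
  set S := {m : ℕ | ∃ f : G →* Equiv.Perm (Fin m), Function.Injective f} with hS
  -- the value of mdeg on G
  have hmG : mdeg p B G = N₀ := by
    rw [mdeg_congr e p B, mdeg_pi]
    exact Finset.sum_congr rfl fun i _ => mdeg_zmod p B (d i) hp (hd i) (hdB i)
  -- exponent bound
  have hBG : ∀ g : G, g ^ p ^ B = 1 := by
    intro g
    apply e.injective
    rw [map_pow, map_one]
    funext i
    have h1 : orderOf (e g i) ∣ p ^ B := by
      refine dvd_trans (orderOf_dvd_natCard _) ?_
      rw [Nat.card_congr Multiplicative.ofAdd.symm, Nat.card_zmod]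
      exact pow_dvd_pow p (hdB i)
    exact orderOf_dvd_iff_pow_eq_one.mp h1
  -- upper bound
  have upper : N₀ ∈ S := by
    have hcards : Fintype.card (Σ i : Fin n, Fin (p ^ d i)) = N₀ := by simp [hN₀]
    refine ⟨((permMulEquiv (Fintype.equivFinOfCardEq hcards)).toMonoidHom.comp
      ((Equiv.Perm.sigmaCongrRightHom (fun i : Fin n => Fin (p ^ d i))).comp
        ((piMapHom (fun i => cayleyPerm (Multiplicative (ZMod (p ^ d i)))
          (by simp [ZMod.card]))).comp e.toMonoidHom))), ?_⟩
    simp only [MonoidHom.coe_comp]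
    exact (MulEquiv.injective _).comp (Equiv.Perm.sigmaCongrRightHom_injective.comp
      ((piMapHom_injective _ fun i => cayleyPerm_injective _ _).comp e.injective))
  -- lower bound
  have lower : ∀ N ∈ S, N₀ ≤ N := by
    rintro N ⟨f, hf⟩
    letI : MulAction G (Fin N) := MulAction.compHom _ f
    have hconj : ∀ (g : G) (x : Fin N),
        MulAction.stabilizer G (g • x) = MulAction.stabilizer G x := by
      intro g x
      ext h
      simp only [MulAction.mem_stabilizer_iff]
      rw [smul_smul, mul_comm, ← smul_smul]
      exact smul_left_cancel_iff g
    haveI : Fintype (Quotient (MulAction.orbitRel G (Fin N))) := Fintype.ofFinite _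
    set Ω := Quotient (MulAction.orbitRel G (Fin N)) with hΩ
    set K : Ω → Subgroup G := fun ω => MulAction.stabilizer G ω.out with hK
    haveI : ∀ ω : Ω, Finite (G ⧸ K ω) := fun ω => inferInstance
    set Φ : G →* ∀ ω : Ω, G ⧸ K ω := Pi.monoidHom (fun ω => QuotientGroup.mk' (K ω)) with hΦ
    have hΦinj : Function.Injective Φ := by
      rw [injective_iff_map_eq_one]
      intro g hg
      have hmem : ∀ x : Fin N, g • x = x := by
        intro x
        have h1 : g ∈ K ⟦x⟧ := by
          have h2 : QuotientGroup.mk' (K ⟦x⟧) g = 1 := congrFun hg ⟦x⟧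
          rwa [QuotientGroup.mk'_apply, QuotientGroup.eq_one_iff] at h2
        obtain ⟨g', hg'⟩ : (⟦x⟧ : Ω).out ∈ MulAction.orbit G x := by
          rw [← MulAction.orbitRel_apply]
          exact Quotient.exact (Quotient.out_eq _)
        rw [hK] at h1
        simp only at h1
        rw [← hg', hconj g' x] at h1
        exact h1
      have hfg : f g = 1 := by
        ext x
        exact congrArg Fin.val (hmem x)
      have := hf (hfg.trans (map_one f).symm)
      exact this
    have hmono : mdeg p B G ≤ mdeg p B (∀ ω : Ω, G ⧸ K ω) := mdeg_mono Φ hΦinj p B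
    have hpi : mdeg p B (∀ ω : Ω, G ⧸ K ω) = ∑ ω : Ω, mdeg p B (G ⧸ K ω) := mdeg_pi _ p B
    have hle : ∀ ω : Ω, mdeg p B (G ⧸ K ω) ≤ Nat.card (G ⧸ K ω) := by
      intro ω
      refine mdeg_le_card p B hp _ ?_
      intro q
      obtain ⟨g, rfl⟩ := QuotientGroup.mk'_surjective (K ω) q
      rw [← map_pow, hBG, map_one]
    have hNsum : ∑ ω : Ω, Nat.card (G ⧸ K ω) = N := by
      haveI : ∀ ω : Ω, Fintype (G ⧸ K ω) := fun ω => Fintype.ofFinite _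
      have e2 := MulAction.selfEquivSigmaOrbitsQuotientStabilizer G (Fin N)
      have h3 : N = Nat.card (Σ ω : Ω, G ⧸ K ω) := by
        rw [← Nat.card_congr e2, Nat.card_eq_fintype_card, Fintype.card_fin]
      rw [h3, Nat.card_eq_fintype_card, Fintype.card_sigma]
      exact Finset.sum_congr rfl fun ω _ => Nat.card_eq_fintype_card
    calc N₀ = mdeg p B G := hmG.symm
      _ ≤ ∑ ω : Ω, mdeg p B (G ⧸ K ω) := hpi ▸ hmono
      _ ≤ ∑ ω : Ω, Nat.card (G ⧸ K ω) := Finset.sum_le_sum fun ω _ => hle ω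
      _ = N := hNsum
  exact le_antisymm (Nat.sInf_le upper) (le_csInf ⟨N₀, upper⟩ lower)
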